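/- Let n be a natural number, let p be a nonzero real number, and let M : Matrix (Fin n) (Fin n) ℝ. Define A : ℝ → Matrix (Fin n) (Fin n) ℝ by A(t) = (det(1 + t•M))^(2/p) • ((1 + t•M)⁻¹ * ((1 + t•M)⁻¹)ᵀ), where 1 denotes the identity matrix, the real power is Real.rpow, and ᵀ denotes matrix transpose. Then A(0) = 1 and A has derivative (2/p)·trace(M) • 1 − M − Mᵀ at t = 0. -/

import Mathlib

open scoped Matrix

section Aux
attribute [local instance] Matrix.linftyOpNormedRing Matrix.linftyOpNormedAlgebra

variable (n : ℕ) (M : Matrix (Fin n) (Fin n) ℝ)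

private lemma auxB : HasDerivAt (fun t : ℝ => (1 : Matrix (Fin n) (Fin n) ℝ) + t • M) M 0 := by
  exact (((hasDerivAt_id (0:ℝ)).smul_const M).const_add (1 : Matrix (Fin n) (Fin n) ℝ)).congr_deriv (by simp)

private lemma auxInv :
    HasDerivAt (fun t : ℝ => ((1 : Matrix (Fin n) (Fin n) ℝ) + t • M)⁻¹) (-M) 0 := by
  have h1 : HasFDerivAt Ring.inverse
      (-ContinuousLinearMap.mulLeftRight ℝ (Matrix (Fin n) (Fin n) ℝ)
        ((1 : (Matrix (Fin n) (Fin n) ℝ)ˣ)⁻¹ : (Matrix (Fin n) (Fin n) ℝ)ˣ)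
        (((1 : (Matrix (Fin n) (Fin n) ℝ)ˣ)⁻¹ : (Matrix (Fin n) (Fin n) ℝ)ˣ)))
      ((1 : (Matrix (Fin n) (Fin n) ℝ)ˣ) : Matrix (Fin n) (Fin n) ℝ) :=
    hasFDerivAt_ringInverse (1 : (Matrix (Fin n) (Fin n) ℝ)ˣ)
  have h0 : ((1 : (Matrix (Fin n) (Fin n) ℝ)ˣ) : Matrix (Fin n) (Fin n) ℝ)
      = (1 : Matrix (Fin n) (Fin n) ℝ) + (0:ℝ) • M := by simp
  rw [h0] at h1
  have h2 := h1.comp_hasDerivAt 0 (auxB n M)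
  simp only [Units.val_one, inv_one] at h2
  have h3 : HasDerivAt (fun t : ℝ => Ring.inverse ((1 : Matrix (Fin n) (Fin n) ℝ) + t • M))
      (-M) 0 := by exact h2.congr_deriv (by simp)
  simpa only [Matrix.nonsing_inv_eq_ringInverse] using h3

private lemma auxInvT :
    HasDerivAt (fun t : ℝ => (((1 : Matrix (Fin n) (Fin n) ℝ) + t • M)⁻¹)ᵀ) (-Mᵀ) 0 := by
  have h := (LinearMap.toContinuousLinearMap
      ((Matrix.transposeLinearEquiv (Fin n) (Fin n) ℝ ℝ).toLinearMap)).hasFDerivAt.comp_hasDerivAt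
      0 (auxInv n M)
  exact h.congr_deriv (by simp [Matrix.transposeLinearEquiv, Matrix.transposeAddEquiv]; exact Matrix.transpose_neg M)

private lemma auxProd : HasDerivAt
    (fun t : ℝ => ((1 : Matrix (Fin n) (Fin n) ℝ) + t • M)⁻¹ *
      (((1 : Matrix (Fin n) (Fin n) ℝ) + t • M)⁻¹)ᵀ)
    (-M - Mᵀ) 0 := by
  have h := (auxInv n M).mul (auxInvT n M)
  exact h.congr_deriv (by simp [sub_eq_add_neg])

private lemma auxDet :
    HasDerivAt (fun t : ℝ => ((1 : Matrix (Fin n) (Fin n) ℝ) + t • M).det) M.trace 0 := by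
  set q := ((1 + (Polynomial.X : Polynomial ℝ) • M.map Polynomial.C).det).divX.divX with hq
  have h : ∀ t : ℝ, ((1 : Matrix (Fin n) (Fin n) ℝ) + t • M).det
      = 1 + M.trace * t + q.eval t * t ^ 2 := fun t => Matrix.det_one_add_smul t M
  have hA : HasDerivAt (fun t : ℝ => M.trace * t) M.trace 0 := by
    simpa using (hasDerivAt_id (0:ℝ)).const_mul M.trace
  have hB : HasDerivAt (fun t : ℝ => q.eval t * t ^ 2) 0 0 := by
    exact ((q.hasDerivAt 0).mul (hasDerivAt_pow 2 0)).congr_deriv (by simp)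
  have h1 : HasDerivAt (fun t : ℝ => 1 + M.trace * t + q.eval t * t ^ 2) M.trace 0 := by
    exact ((hA.const_add 1).add hB).congr_deriv (by simp)
  simpa only [← h] using h1

private lemma auxRpow (p : ℝ) : HasDerivAt
    (fun t : ℝ => ((1 : Matrix (Fin n) (Fin n) ℝ) + t • M).det ^ (2 / p)) (2 / p * M.trace) 0 := by
  have h := (auxDet n M).rpow_const (p := 2 / p) (Or.inl (by simp))
  simpa [mul_comm] using h

private lemma auxFull (p : ℝ) : HasDerivAt
    (fun t : ℝ => (((1 : Matrix (Fin n) (Fin n) ℝ) + t • M).det ^ (2 / p)) •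
      (((1 : Matrix (Fin n) (Fin n) ℝ) + t • M)⁻¹ *
        (((1 : Matrix (Fin n) (Fin n) ℝ) + t • M)⁻¹)ᵀ))
    ((2 / p * M.trace) • (1 : Matrix (Fin n) (Fin n) ℝ) - M - Mᵀ) 0 := by
  have h := (auxRpow n M p).smul (auxProd n M)
  have heq : ((2 / p * M.trace) • (1 : Matrix (Fin n) (Fin n) ℝ) - M - Mᵀ)
      = (((1 : Matrix (Fin n) (Fin n) ℝ) + (0:ℝ) • M).det ^ (2 / p)) • (-M - Mᵀ)
        + (2 / p * M.trace) • (((1 : Matrix (Fin n) (Fin n) ℝ) + (0:ℝ) • M)⁻¹ *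
            (((1 : Matrix (Fin n) (Fin n) ℝ) + (0:ℝ) • M)⁻¹)ᵀ) := by
    simp [sub_eq_add_neg, add_comm, smul_sub]
    abel
  rw [heq]
  exact h

private lemma entry_le_linfty {N : ℕ} (A : Matrix (Fin N) (Fin N) ℝ) (i j : Fin N) :
    ‖A i j‖ ≤ ‖A‖ := by
  rw [Matrix.linfty_opNorm_def]
  have h1 : (‖A i j‖₊ : ℝ) ≤ ((∑ k, ‖A i k‖₊ : NNReal) : ℝ) := by
    exact_mod_cast Finset.single_le_sum (f := fun k => ‖A i k‖₊) (fun _ _ => zero_le)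
      (Finset.mem_univ j)
  refine h1.trans ?_
  exact_mod_cast Finset.le_sup (f := fun i => ∑ k, ‖A i k‖₊) (Finset.mem_univ i)

private lemma auxEntry (p : ℝ) : ∀ c : ℝ, 0 < c → ∀ᶠ y in nhds (0:ℝ), ∀ i j : Fin n,
    ‖((fun t : ℝ => (((1 : Matrix (Fin n) (Fin n) ℝ) + t • M).det ^ (2 / p)) •
        (((1 : Matrix (Fin n) (Fin n) ℝ) + t • M)⁻¹ *
          (((1 : Matrix (Fin n) (Fin n) ℝ) + t • M)⁻¹)ᵀ)) y
      - (fun t : ℝ => (((1 : Matrix (Fin n) (Fin n) ℝ) + t • M).det ^ (2 / p)) •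
        (((1 : Matrix (Fin n) (Fin n) ℝ) + t • M)⁻¹ *
          (((1 : Matrix (Fin n) (Fin n) ℝ) + t • M)⁻¹)ᵀ)) 0
      - (y - 0) • ((2 / p * M.trace) • (1 : Matrix (Fin n) (Fin n) ℝ) - M - Mᵀ)) i j‖
      ≤ c * ‖y - 0‖ := by
  intro c hc
  have h := Asymptotics.isLittleO_iff.mp (hasDerivAt_iff_isLittleO.mp (auxFull n M p)) hc
  filter_upwards [h] with y hy i j
  exact (entry_le_linfty _ i j).trans hy

end Aux

open scoped Matrix

attribute [local instance] Matrix.normedAddCommGroup Matrix.normedSpace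

/-- Lemma 3.1(ii): with `A(t) = (det(I + tM))^(2/p) • ((I + tM)⁻¹ ((I + tM)⁻¹)ᵀ)`,
one has `A(0) = I` and `Ȧ(0) = (2/p)·trace(M) • I − M − Mᵀ`. The power is a real
power (`Real.rpow`). -/
theorem stmt_5 (n : ℕ) (p : ℝ) (hp : p ≠ 0) (M : Matrix (Fin n) (Fin n) ℝ) :
    (fun t : ℝ => (((1 : Matrix (Fin n) (Fin n) ℝ) + t • M).det ^ (2 / p)) •
        (((1 : Matrix (Fin n) (Fin n) ℝ) + t • M)⁻¹ *
          (((1 : Matrix (Fin n) (Fin n) ℝ) + t • M)⁻¹)ᵀ)) 0 = 1 ∧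
      HasDerivAt
        (fun t : ℝ => (((1 : Matrix (Fin n) (Fin n) ℝ) + t • M).det ^ (2 / p)) •
          (((1 : Matrix (Fin n) (Fin n) ℝ) + t • M)⁻¹ *
            (((1 : Matrix (Fin n) (Fin n) ℝ) + t • M)⁻¹)ᵀ))
        ((2 / p * M.trace) • (1 : Matrix (Fin n) (Fin n) ℝ) - M - Mᵀ) 0 := by
  constructor
  · simp
  · refine hasDerivAt_iff_isLittleO.mpr ?_
    rw [Asymptotics.isLittleO_iff]
    intro c hc
    filter_upwards [auxEntry n M p c hc] with y hy
    refine (Matrix.norm_le_iff (by positivity)).mpr ?_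
    exact hy
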